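/- arXiv:2411.14814 — 4 statements merged into one kernel-verified Lean document; each statement's English description precedes it below -/
import Mathlib

section
/- Let A be an abelian group with subgroups A₀ and A₁ such that A₀ + A₁ = A, let G be a finite group acting on A by automorphisms ρ : G → Aut(A) such that ρ(g) restricts to the identity on A₀ and ρ(g)(A₁) ⊆ A₁ for all g, and let τ : G → A be a 1-cocycle (τ(gh) = ρ(g)(τ(h)) + τ(g)). Let K₀ = {a₀ ∈ A₀ | ∃ a₁ ∈ A₁, a₀ + a₁ = 0}. Then for any choice of decompositions τ(g) = t_g⁰ + t_g¹ with t_g⁰ ∈ A₀, t_g¹ ∈ A₁, the formula g · (a₀ + K₀) = a₀ + t_g⁰ + K₀ defines an action of G on the quotient group A₀/K₀, independent of the choices. -/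
/-- Given an abelian group A = A₀ + A₁ with a G-action that is trivial on A₀ and
preserves A₁, and a 1-cocycle τ with decompositions τ(g) = t_g⁰ + t_g¹, the formula
g · (a₀ + K₀) = a₀ + t_g⁰ + K₀ defines an action of G on A₀/K₀, independent of choices. -/
theorem translation_action_on_quotient_well_defined
    (A : Type*) [AddCommGroup A] (G : Type*) [Group G] [Finite G]
    (A₀ A₁ : AddSubgroup A) (hsum : A₀ ⊔ A₁ = ⊤)
    (ρ : G →* Multiplicative (AddAut A))
    (hρ0 : ∀ g : G, ∀ a ∈ A₀, Multiplicative.toAdd (ρ g) a = a)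
    (hρ1 : ∀ g : G, ∀ a ∈ A₁, Multiplicative.toAdd (ρ g) a ∈ A₁)
    (τ : G → A)
    (hτ : ∀ g h : G, τ (g * h) = Multiplicative.toAdd (ρ g) (τ h) + τ g)
    (K₀ : Set A) (hK₀ : K₀ = {a | a ∈ A₀ ∧ ∃ b ∈ A₁, a + b = 0})
    (t s : G → A)
    (ht0 : ∀ g, t g ∈ A₀) (ht1 : ∀ g, τ g - t g ∈ A₁)
    (hs0 : ∀ g, s g ∈ A₀) (hs1 : ∀ g, τ g - s g ∈ A₁) :
    t 1 ∈ K₀ ∧ (∀ g h : G, t (g * h) - t g - t h ∈ K₀) ∧ (∀ g : G, t g - s g ∈ K₀) := by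
  subst hK₀
  have hmem : ∀ a : A, a ∈ A₀ → -a ∈ A₁ →
      a ∈ {a | a ∈ A₀ ∧ ∃ b ∈ A₁, a + b = 0} := by
    intro a h0 h1
    exact ⟨h0, -a, h1, by abel⟩
  have hτ1 : τ 1 = 0 := by
    have h := hτ 1 1
    rw [one_mul, map_one] at h
    simpa using (right_eq_add.mp h)
  refine ⟨?_, ?_, ?_⟩
  · apply hmem _ (ht0 1)
    have := ht1 1
    rw [hτ1] at this
    simpa using this
  · intro g h
    apply hmem _ (sub_mem (sub_mem (ht0 (g*h)) (ht0 g)) (ht0 h))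
    have key : -(t (g*h) - t g - t h)
        = (τ (g*h) - t (g*h)) - Multiplicative.toAdd (ρ g) (τ h - t h) - (τ g - t g) := by
      rw [hτ g h, map_sub]
      rw [hρ0 g (t h) (ht0 h)]
      abel
    rw [key]
    exact sub_mem (sub_mem (ht1 (g*h)) (hρ1 g _ (ht1 h))) (ht1 g)
  · intro g
    apply hmem _ (sub_mem (ht0 g) (hs0 g))
    have : -(t g - s g) = (τ g - t g) - (τ g - s g) := by abel
    rw [this]
    exact sub_mem (ht1 g) (hs1 g)
end

section
/- In the setting of the previous statement, the set H = {g ∈ G | t_g⁰ ∈ K₀} is a well-defined subgroup of G, independent of the choice of the decomposition τ(g) = t_g⁰ + t_g¹. -/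
/-- In the setting of the cocycle decomposition, H = {g ∈ G | t_g⁰ ∈ K₀} is a
well-defined subgroup of G, independent of the choice of decomposition. -/
theorem H_is_well_defined_subgroup
    (A : Type*) [AddCommGroup A] (G : Type*) [Group G] [Finite G]
    (A₀ A₁ : AddSubgroup A) (hsum : A₀ ⊔ A₁ = ⊤)
    (ρ : G →* Multiplicative (AddAut A))
    (hρ0 : ∀ g : G, ∀ a ∈ A₀, Multiplicative.toAdd (ρ g) a = a)
    (hρ1 : ∀ g : G, ∀ a ∈ A₁, Multiplicative.toAdd (ρ g) a ∈ A₁)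
    (τ : G → A)
    (hτ : ∀ g h : G, τ (g * h) = Multiplicative.toAdd (ρ g) (τ h) + τ g)
    (K₀ : Set A) (hK₀ : K₀ = {a | a ∈ A₀ ∧ ∃ b ∈ A₁, a + b = 0})
    (t s : G → A)
    (ht0 : ∀ g, t g ∈ A₀) (ht1 : ∀ g, τ g - t g ∈ A₁)
    (hs0 : ∀ g, s g ∈ A₀) (hs1 : ∀ g, τ g - s g ∈ A₁) :
    (1 : G) ∈ {g : G | t g ∈ K₀} ∧
    (∀ g h : G, g ∈ {g : G | t g ∈ K₀} → h ∈ {g : G | t g ∈ K₀} →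
      g * h ∈ {g : G | t g ∈ K₀}) ∧
    (∀ g : G, g ∈ {g : G | t g ∈ K₀} → g⁻¹ ∈ {g : G | t g ∈ K₀}) ∧
    (∀ g : G, t g ∈ K₀ ↔ s g ∈ K₀) := by
  -- Key: for any decomposition u, u g ∈ K₀ ↔ τ g ∈ A₁
  have key : ∀ (u : G → A), (∀ g, u g ∈ A₀) → (∀ g, τ g - u g ∈ A₁) →
      ∀ g, u g ∈ K₀ ↔ τ g ∈ A₁ := by
    intro u hu0 hu1 g
    subst hK₀
    simp only [Set.mem_setOf_eq]
    constructor
    · rintro ⟨-, b, hb, hab⟩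
      have hug : u g ∈ A₁ := by
        have : u g = -b := eq_neg_of_add_eq_zero_left hab
        rw [this]; exact A₁.neg_mem hb
      have : τ g = (τ g - u g) + u g := by abel
      rw [this]; exact A₁.add_mem (hu1 g) hug
    · intro h
      have hug : u g ∈ A₁ := by
        have : u g = τ g - (τ g - u g) := by abel
        rw [this]; exact A₁.sub_mem h (hu1 g)
      exact ⟨hu0 g, -(u g), A₁.neg_mem hug, add_neg_cancel _⟩
  -- τ 1 = 0
  have hτ1 : τ 1 = 0 := by
    have := hτ 1 1
    simp only [mul_one, map_one] at this
    have : τ 1 = τ 1 + τ 1 := by simpa using this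
    exact right_eq_add.mp this
  -- ρ g⁻¹ maps A₁ into A₁
  have hρinv : ∀ g : G, ∀ a ∈ A₁, ρ g⁻¹ a ∈ A₁ := by
    intro g a ha
    have hpow : ∀ n : ℕ, ρ (g ^ n) a ∈ A₁ := by
      intro n
      induction n with
      | zero => simpa using ha
      | succ n ih =>
        have : g ^ (n + 1) = g * g ^ n := by rw [pow_succ']
        rw [this, map_mul]
        exact hρ1 g _ ih
    have h1 : g ^ (orderOf g - 1) * g = 1 := by
      rw [← pow_succ, Nat.sub_add_cancel (Nat.one_le_iff_ne_zero.mpr (orderOf_pos g).ne'),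
        pow_orderOf_eq_one]
    have hg : g⁻¹ = g ^ (orderOf g - 1) := (eq_inv_of_mul_eq_one_left h1).symm
    rw [hg]; exact hpow _
  refine ⟨?_, ?_, ?_, ?_⟩
  · rw [Set.mem_setOf_eq, key t ht0 ht1, hτ1]; exact A₁.zero_mem
  · intro g h hg hh
    rw [Set.mem_setOf_eq, key t ht0 ht1] at *
    rw [hτ g h]
    exact A₁.add_mem (hρ1 g _ hh) hg
  · intro g hg
    rw [Set.mem_setOf_eq, key t ht0 ht1] at *
    have := hτ g g⁻¹
    rw [mul_inv_cancel, hτ1] at this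
    have hρτ : ρ g (τ g⁻¹) = -τ g := eq_neg_of_add_eq_zero_left this.symm
    have : ρ g⁻¹ (ρ g (τ g⁻¹)) ∈ A₁ := hρinv g _ (by rw [hρτ]; exact A₁.neg_mem hg)
    simpa [← AddAut.mul_apply, ← map_mul] using this
  · intro g
    rw [key t ht0 ht1, key s hs0 hs1]
end

section
/- Let A be an abelian group written as A = (A₀ × A₁)/K for subgroups as above, and suppose a cyclic group G = ⟨g⟩ of order n acts on A by g((a₀,a₁)+K) = (a₀ + t₀, α(a₁)) + K, where α : A₁ → A₁ is an automorphism such that α^m - id is surjective (onto A₁) for all 1 ≤ m < n. If the action of G on A is free, then m·t₀ ∉ K₀ for all 1 ≤ m < n, where K₀ is the image of K under the first projection. -/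
/-- If a cyclic group of order n acts on A = (A₀ × A₁)/K via
g((a₀,a₁) + K) = (a₀ + t₀, α(a₁)) + K with α^m - id surjective for 1 ≤ m < n,
and the action is free, then m·t₀ ∉ K₀ for 1 ≤ m < n, where K₀ is the image of K
under the first projection. -/
theorem free_action_implies_translation_nontorsion
    (A₀ A₁ : Type*) [AddCommGroup A₀] [AddCommGroup A₁]
    (K : AddSubgroup (A₀ × A₁))
    (hK1 : ∀ x ∈ K, x.1 = 0 → x = 0)
    (hK2 : ∀ x ∈ K, x.2 = 0 → x = 0)
    (n : ℕ) (hn : 0 < n)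
    (t₀ : A₀) (α : A₁ ≃+ A₁)
    (hα : ∀ m : ℕ, 1 ≤ m → m < n →
      Function.Surjective (fun a : A₁ => (⇑α)^[m] a - a))
    (g : A₀ × A₁ → A₀ × A₁) (hg : g = fun x => (x.1 + t₀, α x.2))
    (hfree : ∀ (m : ℕ) (x : A₀ × A₁), g^[m] x - x ∈ K → n ∣ m) :
    ∀ m : ℕ, 1 ≤ m → m < n → m • t₀ ∉ Prod.fst '' (K : Set (A₀ × A₁)) := by
  intro m hm1 hmn hmem
  obtain ⟨k, hkK, hk1⟩ := hmem
  obtain ⟨a₁, ha₁⟩ := hα m hm1 hmn k.2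
  simp only at ha₁
  have hiter : ∀ (j : ℕ) (x : A₀ × A₁), g^[j] x = (x.1 + j • t₀, (⇑α)^[j] x.2) := by
    intro j
    induction j with
    | zero => intro x; simp
    | succ j ih =>
      intro x
      rw [Function.iterate_succ_apply', ih, hg]
      simp [succ_nsmul, add_assoc, Function.iterate_succ_apply']
  have hd : g^[m] (0, a₁) - (0, a₁) ∈ K := by
    rw [hiter]
    have : ((0 : A₀) + m • t₀, (⇑α)^[m] a₁) - (0, a₁) = k := by
      ext
      · simp [hk1]
      · simpa using ha₁
    rw [this]; exact hkK
  have := hfree m _ hd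
  exact absurd (Nat.le_of_dvd hm1 this) (not_le.mpr hmn)
end

section
/- Let A = (E_{τ₀} × E_{τ₁} × E_i)/K with K generated by (1/2, 1/2, 0), and let g be the automorphism of A induced by (z₀,z₁,z₂) ↦ (z₀ + 1/4, -z₁, iz₂). Then g has order 4 in Bihol(A) and the group ⟨g⟩ acts freely on A. -/
open Complex

/-- The lattice ℤ + τℤ in ℂ. -/
noncomputable def lattice (τ : ℂ) : AddSubgroup ℂ := AddSubgroup.closure {1, τ}

/-- The complex torus ℂ/(ℤ + τℤ). -/
abbrev Torus (τ : ℂ) := ℂ ⧸ lattice τ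

/-- Multiplication by i preserves the square lattice ℤ + iℤ. -/
lemma mulLeft_I_maps_lattice : ∀ x ∈ lattice I, I * x ∈ lattice I := by
  intro x hx
  induction hx using AddSubgroup.closure_induction with
  | mem y hy =>
    rcases hy with hy | hy
    · subst hy
      rw [mul_one]; exact AddSubgroup.subset_closure (by simp : I ∈ ({1, I} : Set ℂ))
    · simp only [Set.mem_singleton_iff] at hy
      subst hy
      rw [Complex.I_mul_I]
      exact AddSubgroup.neg_mem _
        (AddSubgroup.subset_closure (by simp : (1 : ℂ) ∈ ({1, I} : Set ℂ)))
  | zero => simpa using (AddSubgroup.zero_mem (lattice I))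
  | add a b _ _ ha hb => simpa [mul_add] using AddSubgroup.add_mem _ ha hb
  | neg a _ ha => simpa using AddSubgroup.neg_mem _ ha

/-- Multiplication by i descended to the torus ℂ/(ℤ + iℤ). -/
noncomputable def mulI : Torus I → Torus I :=
  QuotientAddGroup.map (lattice I) (lattice I) (AddMonoidHom.mulLeft I)
    (fun x hx => mulLeft_I_maps_lattice x hx)

/-- The lift to E₀ × E₁ × E_i of the automorphism
(z₀,z₁,z₂) ↦ (z₀ + 1/4, -z₁, iz₂). -/
noncomputable def gLift (τ₀ τ₁ : ℂ) :
    Torus τ₀ × Torus τ₁ × Torus I → Torus τ₀ × Torus τ₁ × Torus I :=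
  fun p => (p.1 + QuotientAddGroup.mk (1 / 4 : ℂ), (-p.2.1, mulI p.2.2))


lemma mem_lattice_iff (τ x : ℂ) : x ∈ lattice τ ↔ ∃ a b : ℤ, x = a + b * τ := by
  unfold lattice
  rw [show ({1, τ} : Set ℂ) = {1} ∪ {τ} by rfl, AddSubgroup.closure_union,
    AddSubgroup.mem_sup]
  constructor
  · rintro ⟨y, hy, z, hz, rfl⟩
    rw [AddSubgroup.mem_closure_singleton] at hy hz
    obtain ⟨a, rfl⟩ := hy; obtain ⟨b, rfl⟩ := hz
    exact ⟨a, b, by push_cast [zsmul_eq_mul]; ring⟩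
  · rintro ⟨a, b, rfl⟩
    exact ⟨a, AddSubgroup.mem_closure_singleton.2 ⟨a, by simp [zsmul_eq_mul]⟩,
      b * τ, AddSubgroup.mem_closure_singleton.2 ⟨b, by simp [zsmul_eq_mul]⟩, rfl⟩

lemma real_mem_lattice {τ : ℂ} (h : 0 < τ.im) {x : ℝ} (hx : (x : ℂ) ∈ lattice τ) :
    ∃ a : ℤ, x = a := by
  obtain ⟨a, b, hab⟩ := (mem_lattice_iff τ x).1 hx
  have him := congrArg Complex.im hab
  simp at him
  rcases him with him | him
  · refine ⟨a, ?_⟩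
    have := congrArg Complex.re hab
    simpa [him] using this
  · exact absurd him h.ne'

/-- On A = (E_{τ₀} × E_{τ₁} × E_i)/K with K generated by (1/2, 1/2, 0), the
automorphism induced by (z₀,z₁,z₂) ↦ (z₀ + 1/4, -z₁, iz₂) has order 4 and
generates a group acting freely on A: at the level of the cover, g⁴ differs from
the identity by an element of K at every point, while g, g², g³ never do. -/
theorem order_four_free_action
    (τ₀ τ₁ : ℂ) (h₀ : 0 < τ₀.im) (h₁ : 0 < τ₁.im)
    (K : AddSubgroup (Torus τ₀ × Torus τ₁ × Torus I))
    (hK : K = AddSubgroup.closure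
      {((QuotientAddGroup.mk (1 / 2 : ℂ) : Torus τ₀),
        ((QuotientAddGroup.mk (1 / 2 : ℂ) : Torus τ₁), (0 : Torus I)))}) :
    (∀ p, (gLift τ₀ τ₁)^[4] p - p ∈ K) ∧
    (∀ p, ∀ m : ℕ, 1 ≤ m → m ≤ 3 → (gLift τ₀ τ₁)^[m] p - p ∉ K) := by
  subst hK
  constructor
  · intro p
    obtain ⟨a, bc⟩ := p
    obtain ⟨b, c⟩ := bc
    induction a using QuotientAddGroup.induction_on with
    | H x =>
    induction b using QuotientAddGroup.induction_on with
    | H y =>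
    induction c using QuotientAddGroup.induction_on with
    | H z =>
    have h0 : (gLift τ₀ τ₁)^[4]
        (QuotientAddGroup.mk x, QuotientAddGroup.mk y, QuotientAddGroup.mk z)
        - (QuotientAddGroup.mk x, QuotientAddGroup.mk y, QuotientAddGroup.mk z) = 0 := by
      simp only [Function.iterate_succ, Function.iterate_zero, Function.comp_apply, id_eq,
        gLift, mulI, QuotientAddGroup.map_mk, AddMonoidHom.coe_mulLeft,
        ← QuotientAddGroup.mk_add, Prod.mk_sub_mk, ← QuotientAddGroup.mk_sub, Prod.mk_eq_zero,
        neg_neg, sub_self, QuotientAddGroup.eq_zero_iff]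
      constructor
      · have h1 : x + 1/4 + 1/4 + 1/4 + 1/4 - x = 1 := by ring
        rw [h1]
        exact AddSubgroup.subset_closure (by simp)
      · refine ⟨trivial, ?_⟩
        have h2 : I * (I * (I * (I * z))) - z = 0 := by ring_nf; simp [Complex.I_pow_four]
        show ((I * (I * (I * (I * z))) : ℂ) : Torus I) - (z : Torus I) = 0
        rw [← QuotientAddGroup.mk_sub, h2, QuotientAddGroup.mk_zero]
    rw [h0]
    exact AddSubgroup.zero_mem _
  · intro p m hm1 hm3 h
    obtain ⟨a, bc⟩ := p
    obtain ⟨b, c⟩ := bc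
    induction a using QuotientAddGroup.induction_on with
    | H x =>
    induction b using QuotientAddGroup.induction_on with
    | H y =>
    induction c using QuotientAddGroup.induction_on with
    | H z =>
    interval_cases m <;>
      rw [AddSubgroup.mem_closure_singleton] at h <;>
      obtain ⟨n, hn⟩ := h <;>
      simp only [Function.iterate_succ, Function.iterate_zero, Function.comp_apply, id_eq,
        gLift, mulI, QuotientAddGroup.map_mk, AddMonoidHom.coe_mulLeft, Prod.smul_mk,
        Prod.mk_sub_mk, ← QuotientAddGroup.mk_add, ← QuotientAddGroup.mk_sub,
        ← QuotientAddGroup.mk_neg, ← QuotientAddGroup.mk_zsmul, smul_zero, Prod.mk.injEq,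
        QuotientAddGroup.eq, zsmul_eq_mul] at hn
    · -- m = 1
      have h1 := hn.1
      have e1 : (-((n : ℂ) * (1/2)) + (x + 1/4 - x)) = (((1/4 - n/2 : ℝ)) : ℂ) := by
        push_cast; ring
      rw [e1] at h1
      obtain ⟨a, ha⟩ := real_mem_lattice h₀ h1
      have h2 : (1 : ℝ) = 2 * n + 4 * a := by linarith
      have h3 : (1 : ℤ) = 2 * n + 4 * a := by exact_mod_cast h2
      omega
    · -- m = 2
      obtain ⟨h1, h2, -⟩ := hn
      have e1 : (-((n : ℂ) * (1/2)) + (x + 1/4 + 1/4 - x)) = (((1/2 - n/2 : ℝ)) : ℂ) := by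
        push_cast; ring
      rw [e1] at h1
      obtain ⟨a, ha⟩ := real_mem_lattice h₀ h1
      have e2 : (-((n : ℂ) * (1/2)) + (- -y - y)) = (((-(n/2) : ℝ)) : ℂ) := by
        push_cast; ring
      rw [e2] at h2
      obtain ⟨b, hb⟩ := real_mem_lattice h₁ h2
      have h3 : (1 : ℝ) = n + 2 * a := by linarith
      have h4 : (n : ℝ) = -2 * b := by linarith
      have h3' : (1 : ℤ) = n + 2 * a := by exact_mod_cast h3
      have h4' : (n : ℤ) = -2 * b := by exact_mod_cast h4
      omega
    · -- m = 3
      have h1 := hn.1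
      have e1 : (-((n : ℂ) * (1/2)) + (x + 1/4 + 1/4 + 1/4 - x)) = (((3/4 - n/2 : ℝ)) : ℂ) := by
        push_cast; ring
      rw [e1] at h1
      obtain ⟨a, ha⟩ := real_mem_lattice h₀ h1
      have h2 : (3 : ℝ) = 2 * n + 4 * a := by linarith
      have h3 : (3 : ℤ) = 2 * n + 4 * a := by exact_mod_cast h2
      omega
end
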